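/- Let k be a positive integer and let p be a prime with p > 400 such that p does not divide 6k. Then there exist x, y, z ∈ ℤ/pℤ, not all zero, with x^6 + y^6 = k·z^6. -/

import Mathlib

open Finset

namespace SolvAux

attribute [local instance] Classical.propDecidable

variable (p : ℕ) [Fact p.Prime]

noncomputable instance : Fintype (MulChar (ZMod p) ℂ) := Fintype.ofFinite _

lemma exp_ne (G : Type*) [Group G] [Finite G] : NeZero (Monoid.exponent G) :=
  ⟨Monoid.exponent_ne_zero_of_finite⟩

/-- The finset of multiplicative characters of `ZMod p` (into `ℂ`) of order dividing 6. -/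
noncomputable def XX : Finset (MulChar (ZMod p) ℂ) := Finset.univ.filter (fun χ => χ ^ 6 = 1)

variable {p}

lemma mem_XX {χ : MulChar (ZMod p) ℂ} : χ ∈ XX p ↔ χ ^ 6 = 1 := by
  simp [XX]

lemma one_mem_XX : (1 : MulChar (ZMod p) ℂ) ∈ XX p := mem_XX.mpr (one_pow 6)

lemma apply_pow_six {χ : MulChar (ZMod p) ℂ} (hχ : χ ∈ XX p) {a : ZMod p} (ha : a ≠ 0) :
    χ a ^ 6 = 1 := by
  rw [← MulChar.pow_apply' χ (by norm_num) a, mem_XX.mp hχ, MulChar.one_apply ha.isUnit]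

lemma abs_apply_eq_one {χ : MulChar (ZMod p) ℂ} (hχ : χ ∈ XX p) {a : ZMod p} (ha : a ≠ 0) :
    ‖χ a‖ = 1 := by
  have h6 : ‖χ a‖ ^ 6 = 1 := by
    rw [← norm_pow, apply_pow_six hχ ha, norm_one]
  nlinarith [norm_nonneg (χ a), sq_nonneg (‖χ a‖ - 1),
    sq_nonneg (‖χ a‖ + 1), sq_nonneg (‖χ a‖ ^ 2 - 1),
    sq_nonneg (‖χ a‖ ^ 3 - 1)]

lemma card_XX_eq_units :
    (XX p).card = (Finset.univ.filter fun u : (ZMod p)ˣ => u ^ 6 = 1).card := by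
  haveI := exp_ne (ZMod p)ˣ
  obtain ⟨e⟩ := MulChar.mulEquiv_units (ZMod p) ℂ
  refine Finset.card_bij (fun χ _ => e χ) (fun χ hχ => ?_) (fun χ₁ h₁ χ₂ h₂ h => ?_)
    (fun u hu => ?_)
  · simp only [mem_filter, mem_univ, true_and] at *
    rw [← map_pow, mem_XX.mp hχ, map_one]
  · exact e.injective h
  · simp only [mem_filter, mem_univ, true_and] at hu
    exact ⟨e.symm u, mem_XX.mpr (by simpa using e.injective (by simp [map_pow, hu])), by simp⟩

lemma card_XX_le : (XX p).card ≤ 6 := by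
  rw [card_XX_eq_units]
  have := IsCyclic.card_pow_eq_one_le (α := (ZMod p)ˣ) (n := 6) (by norm_num)
  convert this using 2

lemma card_units_eq_field :
    (Finset.univ.filter fun u : (ZMod p)ˣ => u ^ 6 = 1).card
      = (Finset.univ.filter fun x : ZMod p => x ^ 6 = 1).card := by
  refine Finset.card_bij (fun u _ => (u : ZMod p)) (fun u hu => ?_) (fun u₁ h₁ u₂ h₂ h => ?_)
    (fun x hx => ?_)
  · simp only [mem_filter, mem_univ, true_and] at hu ⊢
    rw [← Units.val_pow_eq_pow_val, hu, Units.val_one]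
  · exact Units.ext h
  · simp only [mem_filter, mem_univ, true_and] at hx
    have hxu : IsUnit x := IsUnit.of_mul_eq_one (x ^ 5) (by rw [← pow_succ']; exact hx)
    refine ⟨hxu.unit, ?_, hxu.unit_spec⟩
    simp only [mem_filter, mem_univ, true_and]
    exact Units.ext (by simpa using hx)

lemma card_XX_eq : (XX p).card = (Finset.univ.filter fun x : ZMod p => x ^ 6 = 1).card :=
  card_XX_eq_units.trans card_units_eq_field


lemma exists_char {a : ZMod p} (ha : a ≠ 0) (hH : ∀ b : ZMod p, b ^ 6 ≠ a) :
    ∃ χ₁ ∈ XX p, χ₁ a ≠ 1 := by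
  have hau : IsUnit a := ha.isUnit
  set u : (ZMod p)ˣ := hau.unit with hu
  let H : Subgroup (ZMod p)ˣ := (powMonoidHom 6 : (ZMod p)ˣ →* (ZMod p)ˣ).range
  haveI := exp_ne ((ZMod p)ˣ ⧸ H)
  have hane : (QuotientGroup.mk' H) u ≠ 1 := by
    rw [Ne, QuotientGroup.mk'_apply, QuotientGroup.eq_one_iff]
    rintro ⟨v, hv⟩
    exact hH (v : ZMod p) (by
      have hv' : v ^ 6 = u := hv
      have : ((v ^ 6 : (ZMod p)ˣ) : ZMod p) = a := by rw [hv']; exact hau.unit_spec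
      simpa using this)
  obtain ⟨φ, hφ⟩ := CommGroup.exists_apply_ne_one_of_hasEnoughRootsOfUnity ((ZMod p)ˣ ⧸ H) ℂ hane
  refine ⟨MulChar.ofUnitHom (φ.comp (QuotientGroup.mk' H)), mem_XX.mpr ?_, ?_⟩
  · apply MulChar.ext
    intro w
    rw [MulChar.pow_apply_coe, MulChar.ofUnitHom_coe, MulChar.one_apply_coe]
    have : ((QuotientGroup.mk' H) w) ^ 6 = 1 := by
      rw [← map_pow, QuotientGroup.mk'_apply, QuotientGroup.eq_one_iff]
      exact ⟨w, rfl⟩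
    calc (↑(φ ((QuotientGroup.mk' H) w)) : ℂ) ^ 6
        = ((φ (((QuotientGroup.mk' H) w) ^ 6) : ℂˣ) : ℂ) := by rw [map_pow]; norm_cast
      _ = 1 := by rw [this, map_one, Units.val_one]
  · have : (MulChar.ofUnitHom (φ.comp (QuotientGroup.mk' H))) a
        = ((φ ((QuotientGroup.mk' H) u) : ℂˣ) : ℂ) := by
      conv_lhs => rw [← hau.unit_spec]
      rw [MulChar.ofUnitHom_coe]
      rfl
    rw [this]
    exact fun h => hφ (Units.ext (by simpa using h))

lemma sum_XX_eq (a : ZMod p) (ha : a ≠ 0) :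
    ∑ χ ∈ XX p, χ a = ((Finset.univ.filter fun x : ZMod p => x ^ 6 = a).card : ℂ) := by
  by_cases hH : ∃ b : ZMod p, b ^ 6 = a
  · obtain ⟨b, rfl⟩ := hH
    have hb : b ≠ 0 := by rintro rfl; simp at ha
    have h1 : ∑ χ ∈ XX p, χ (b ^ 6) = ((XX p).card : ℂ) := by
      rw [Finset.sum_congr rfl (fun χ hχ => ?_), Finset.sum_const, nsmul_eq_mul, mul_one]
      rw [map_pow, apply_pow_six hχ hb]
    have h2 : (Finset.univ.filter fun x : ZMod p => x ^ 6 = b ^ 6).card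
        = (Finset.univ.filter fun x : ZMod p => x ^ 6 = 1).card := by
      refine Finset.card_bij' (fun x _ => x * b⁻¹) (fun y _ => y * b) ?_ ?_ ?_ ?_
      · intro x hx
        simp only [mem_filter, mem_univ, true_and] at hx ⊢
        rw [mul_pow, hx, inv_pow, mul_inv_cancel₀ (pow_ne_zero 6 hb)]
      · intro y hy
        simp only [mem_filter, mem_univ, true_and] at hy ⊢
        rw [mul_pow, hy, one_mul]
      · intro x _; field_simp
      · intro y _; field_simp
    rw [h1, h2, ← card_XX_eq]
  · push_neg at hH
    have h2 : (Finset.univ.filter fun x : ZMod p => x ^ 6 = a) = ∅ := by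
      refine Finset.filter_eq_empty_iff.mpr (fun x _ => hH x)
    rw [h2]
    obtain ⟨χ₁, hχ₁X, hχ₁⟩ := exists_char ha hH
    have key : χ₁ a * ∑ χ ∈ XX p, χ a = ∑ χ ∈ XX p, χ a := by
      rw [Finset.mul_sum]
      refine Finset.sum_bij' (fun χ _ => χ₁ * χ) (fun χ _ => χ₁⁻¹ * χ) ?_ ?_ ?_ ?_ ?_
      · intro χ hχ
        exact mem_XX.mpr (by rw [mul_pow, mem_XX.mp hχ₁X, mem_XX.mp hχ, mul_one])
      · intro χ hχ
        refine mem_XX.mpr (by rw [mul_pow, inv_pow, mem_XX.mp hχ₁X, mem_XX.mp hχ, inv_one, mul_one])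
      · intro χ _; rw [← mul_assoc, inv_mul_cancel, one_mul]
      · intro χ _; rw [← mul_assoc, mul_inv_cancel, one_mul]
      · intro χ _; rw [MulChar.mul_apply]
    have : (χ₁ a - 1) * ∑ χ ∈ XX p, χ a = 0 := by ring_nf; linear_combination key
    rcases mul_eq_zero.mp this with h | h
    · exact absurd (by linear_combination h) hχ₁
    · simp [h]


lemma conj_jacobiSum (χ ψ : MulChar (ZMod p) ℂ) :
    (starRingEnd ℂ) (jacobiSum χ ψ) = jacobiSum χ⁻¹ ψ⁻¹ := by
  rw [jacobiSum, jacobiSum, map_sum]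
  refine Finset.sum_congr rfl (fun x _ => ?_)
  rw [map_mul, ← MulChar.star_apply', ← MulChar.star_apply']
  rfl

lemma abs_jacobiSum {χ ψ : MulChar (ZMod p) ℂ} (hχ : χ ≠ 1) (hψ : ψ ≠ 1) (hχψ : χ * ψ ≠ 1) :
    ‖jacobiSum χ ψ‖ = Real.sqrt p := by
  have hrc : ringChar ℂ ≠ ringChar (ZMod p) := by
    rw [ringChar.eq_zero, ZMod.ringChar_zmod_n]
    exact fun h => (Fact.out : p.Prime).ne_zero h.symm
  have h := jacobiSum_mul_jacobiSum_inv hrc hχ hψ hχψ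
  rw [← conj_jacobiSum, Complex.mul_conj] at h
  have hcard : (Fintype.card (ZMod p) : ℂ) = ((p : ℝ) : ℂ) := by
    rw [ZMod.card]; norm_num
  rw [hcard] at h
  have hns : Complex.normSq (jacobiSum χ ψ) = (p : ℝ) := by exact_mod_cast h
  rw [Complex.norm_def, hns]

lemma sum_char_shift (χ ψ : MulChar (ZMod p) ℂ) {k : ZMod p} (hk : k ≠ 0) :
    ∑ a : ZMod p, χ a * ψ (k - a) = (χ * ψ) k * jacobiSum χ ψ := by
  rw [jacobiSum, Finset.mul_sum, ← Equiv.sum_comp (Equiv.mulLeft₀ k hk)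
    (fun a => χ a * ψ (k - a))]
  refine Finset.sum_congr rfl (fun t _ => ?_)
  have h1 : (Equiv.mulLeft₀ k hk) t = k * t := rfl
  rw [h1, MulChar.mul_apply, show k - k * t = k * (1 - t) by ring, map_mul, map_mul]
  ring


variable (p) in
/-- number of solutions of `x^6 = a` -/
noncomputable def cc (a : ZMod p) : ℕ := (Finset.univ.filter fun x : ZMod p => x ^ 6 = a).card

lemma count_pairs (k : ZMod p) :
    (Finset.univ.filter fun xy : ZMod p × ZMod p => xy.1 ^ 6 + xy.2 ^ 6 = k).card
      = ∑ a : ZMod p, cc p a * cc p (k - a) := by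
  have hc : ∀ a : ZMod p, cc p a = ∑ x : ZMod p, if x ^ 6 = a then 1 else 0 := fun a => by
    rw [cc, Finset.card_filter]
  symm
  calc
    ∑ a : ZMod p, cc p a * cc p (k - a)
        = ∑ a : ZMod p, ∑ x : ZMod p, ∑ y : ZMod p,
            (if x ^ 6 = a then ((if y ^ 6 = k - a then 1 else 0) : ℕ) else 0) := by
          refine Finset.sum_congr rfl fun a _ => ?_
          rw [hc, hc, Finset.sum_mul_sum]
          exact Finset.sum_congr rfl fun x _ => Finset.sum_congr rfl fun y _ => by
            rw [ite_mul, one_mul, zero_mul]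
    _ = ∑ x : ZMod p, ∑ y : ZMod p, ∑ a : ZMod p,
            (if x ^ 6 = a then ((if y ^ 6 = k - a then 1 else 0) : ℕ) else 0) := by
          rw [Finset.sum_comm]
          exact Finset.sum_congr rfl fun x _ => Finset.sum_comm
    _ = ∑ x : ZMod p, ∑ y : ZMod p, ((if y ^ 6 = k - x ^ 6 then 1 else 0) : ℕ) := by
          refine Finset.sum_congr rfl fun x _ => Finset.sum_congr rfl fun y _ => ?_
          rw [Finset.sum_ite_eq Finset.univ (x ^ 6)
            (fun a => if y ^ 6 = k - a then (1 : ℕ) else 0), if_pos (Finset.mem_univ _)]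
    _ = ∑ xy : ZMod p × ZMod p, (if xy.1 ^ 6 + xy.2 ^ 6 = k then 1 else 0) := by
          rw [Fintype.sum_prod_type]
          refine Finset.sum_congr rfl fun x _ => Finset.sum_congr rfl fun y _ =>
            if_congr ?_ rfl rfl
          rw [eq_sub_iff_add_eq, add_comm]
    _ = _ := (Finset.card_filter _ _).symm

lemma cc_eq (a : ZMod p) :
    (cc p a : ℂ) = (if a = 0 then 1 else 0) + ∑ χ ∈ XX p, χ a := by
  by_cases h : a = 0
  · subst h
    rw [if_pos rfl]
    have h1 : cc p (0 : ZMod p) = 1 := by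
      rw [cc]
      have : (Finset.univ.filter fun x : ZMod p => x ^ 6 = 0) = {0} := by
        ext x
        simp [pow_eq_zero_iff (n := 6) (by norm_num : (6:ℕ) ≠ 0)]
      rw [this, Finset.card_singleton]
    have h2 : ∑ χ ∈ XX p, χ (0 : ZMod p) = 0 :=
      Finset.sum_eq_zero fun χ _ => χ.map_nonunit (by simpa using not_isUnit_zero)
    rw [h1, h2]
    norm_num
  · rw [if_neg h, sum_XX_eq a h, zero_add]
    norm_cast


lemma main_count {k : ZMod p} (hk : k ≠ 0) (hp400 : 400 < p)
    (hN' : ∀ x y : ZMod p, x ^ 6 + y ^ 6 ≠ k)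
    (hM' : ∀ x : ZMod p, x ^ 6 ≠ -1) : False := by
  have hN : (Finset.univ.filter fun xy : ZMod p × ZMod p => xy.1 ^ 6 + xy.2 ^ 6 = k).card = 0 :=
    Finset.card_eq_zero.mpr (Finset.filter_eq_empty_iff.mpr fun xy _ => hN' xy.1 xy.2)
  have hM : cc p (-1) = 0 :=
    Finset.card_eq_zero.mpr (Finset.filter_eq_empty_iff.mpr fun x _ => hM' x)
  set S : ZMod p → ℂ := fun a => ∑ χ ∈ XX p, χ a with hS
  have hm1 : (-1 : ZMod p) ≠ 0 := by
    simp only [ne_eq, neg_eq_zero]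
    exact one_ne_zero
  have hSm1 : S (-1) = 0 := by
    have h := cc_eq (p := p) (-1)
    rw [if_neg hm1, zero_add, hM] at h
    rw [hS]
    exact_mod_cast h.symm
  have h0 : ∑ a : ZMod p, (cc p a : ℂ) * (cc p (k - a) : ℂ) = 0 := by
    have h := count_pairs (p := p) k
    rw [hN] at h
    have h' : ((∑ a : ZMod p, cc p a * cc p (k - a) : ℕ) : ℂ) = 0 := by
      rw [← h]; norm_num
    push_cast at h'
    exact h'
  have hexp : ∑ a : ZMod p, (cc p a : ℂ) * (cc p (k - a) : ℂ)
      = (∑ a : ZMod p, (if a = 0 then (1:ℂ) else 0) * (if k - a = 0 then 1 else 0))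
      + (∑ a : ZMod p, (if a = 0 then (1:ℂ) else 0) * S (k - a))
      + (∑ a : ZMod p, S a * (if k - a = 0 then (1:ℂ) else 0))
      + (∑ a : ZMod p, S a * S (k - a)) := by
    rw [← Finset.sum_add_distrib, ← Finset.sum_add_distrib, ← Finset.sum_add_distrib]
    refine Finset.sum_congr rfl fun a _ => ?_
    rw [cc_eq, cc_eq]
    ring
  have hT1 : (∑ a : ZMod p, (if a = 0 then (1:ℂ) else 0) * (if k - a = 0 then 1 else 0)) = 0 := by
    refine Finset.sum_eq_zero fun a _ => ?_
    by_cases h : a = 0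
    · rw [if_neg (show ¬(k - a = 0) by rw [h, sub_zero]; exact hk), mul_zero]
    · rw [if_neg h, zero_mul]
  have hT2 : (∑ a : ZMod p, (if a = 0 then (1:ℂ) else 0) * S (k - a)) = S k := by
    rw [Finset.sum_eq_single_of_mem 0 (Finset.mem_univ _)
      (fun a _ h => by rw [if_neg h, zero_mul])]
    rw [if_pos rfl, one_mul, sub_zero]
  have hT3 : (∑ a : ZMod p, S a * (if k - a = 0 then (1:ℂ) else 0)) = S k := by
    rw [Finset.sum_eq_single_of_mem k (Finset.mem_univ _)
      (fun a _ h => by rw [if_neg (sub_ne_zero.mpr (Ne.symm h)), mul_zero])]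
    rw [sub_self, if_pos rfl, mul_one]
  have hT4 : (∑ a : ZMod p, S a * S (k - a))
      = ∑ χ ∈ XX p, ∑ ψ ∈ XX p, (χ * ψ) k * jacobiSum χ ψ := by
    have h1 : ∀ a ∈ (Finset.univ : Finset (ZMod p)), S a * S (k - a)
        = ∑ χ ∈ XX p, ∑ ψ ∈ XX p, χ a * ψ (k - a) := fun a _ =>
      Finset.sum_mul_sum _ _ _ _
    rw [Finset.sum_congr rfl h1, Finset.sum_comm]
    refine Finset.sum_congr rfl fun χ _ => ?_
    rw [Finset.sum_comm]
    exact Finset.sum_congr rfl fun ψ _ => sum_char_shift χ ψ hk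
  set X' : Finset (MulChar (ZMod p) ℂ) := (XX p).erase 1 with hX'
  have hsum_upto : ∀ b : ZMod p, b ≠ 0 → ∑ χ ∈ X', χ b = S b - 1 := by
    intro b hb
    rw [hX', Finset.sum_erase_eq_sub one_mem_XX, MulChar.one_apply hb.isUnit]
  have hf1 : ∑ ψ ∈ XX p, ((1 : MulChar (ZMod p) ℂ) * ψ) k * jacobiSum 1 ψ
      = (p : ℂ) - 1 - S k := by
    rw [← Finset.add_sum_erase _ _ one_mem_XX]
    have e1 : ((1 : MulChar (ZMod p) ℂ) * 1) k * jacobiSum (1 : MulChar (ZMod p) ℂ) 1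
        = (p:ℂ) - 2 := by
      rw [mul_one, MulChar.one_apply hk.isUnit, one_mul, jacobiSum_one_one, ZMod.card]
    have e2 : ∑ ψ ∈ (XX p).erase 1, ((1 : MulChar (ZMod p) ℂ) * ψ) k * jacobiSum 1 ψ
        = -(S k - 1) := by
      rw [Finset.sum_congr rfl (fun ψ hψ => by
        rw [one_mul, jacobiSum_one_nontrivial (Finset.ne_of_mem_erase hψ), mul_neg_one])]
      rw [Finset.sum_neg_distrib, hsum_upto k hk]
    rw [e1, e2]
    ring
  have hfχ : ∀ χ ∈ X', ∑ ψ ∈ XX p, (χ * ψ) k * jacobiSum χ ψ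
      = -(χ k) - χ (-1) + ∑ ψ ∈ X'.erase χ⁻¹, (χ * ψ) k * jacobiSum χ ψ := by
    intro χ hχ
    have hχ1 : χ ≠ 1 := Finset.ne_of_mem_erase hχ
    have hχX : χ ∈ XX p := Finset.mem_of_mem_erase hχ
    have hinvX : χ⁻¹ ∈ XX p := mem_XX.mpr (by rw [inv_pow, mem_XX.mp hχX, inv_one])
    have hinv1 : χ⁻¹ ≠ (1 : MulChar (ZMod p) ℂ) := fun h => hχ1 (by rwa [inv_eq_one] at h)
    have hinvX' : χ⁻¹ ∈ X' := Finset.mem_erase.mpr ⟨hinv1, hinvX⟩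
    rw [← Finset.add_sum_erase _ _ one_mem_XX, ← hX', ← Finset.add_sum_erase _ _ hinvX']
    have e1 : (χ * 1) k * jacobiSum χ 1 = -(χ k) := by
      rw [mul_one, jacobiSum_comm, jacobiSum_one_nontrivial hχ1, mul_neg_one]
    have e2 : (χ * χ⁻¹) k * jacobiSum χ χ⁻¹ = -χ (-1) := by
      rw [mul_inv_cancel, MulChar.one_apply hk.isUnit, jacobiSum_nontrivial_inv hχ1, one_mul]
    rw [e1, e2]
    ring
  have hT4' : (∑ χ ∈ XX p, ∑ ψ ∈ XX p, (χ * ψ) k * jacobiSum χ ψ)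
      = (p:ℂ) + 1 - 2 * S k - S (-1)
        + ∑ χ ∈ X', ∑ ψ ∈ X'.erase χ⁻¹, (χ * ψ) k * jacobiSum χ ψ := by
    rw [← Finset.add_sum_erase _ _ one_mem_XX, hf1, ← hX', Finset.sum_congr rfl hfχ,
      Finset.sum_add_distrib, Finset.sum_sub_distrib, Finset.sum_neg_distrib,
      hsum_upto k hk, hsum_upto (-1) hm1]
    ring
  rw [hexp, hT1, hT2, hT3, hT4, hT4', hSm1] at h0
  set R : ℂ := ∑ χ ∈ X', ∑ ψ ∈ X'.erase χ⁻¹, (χ * ψ) k * jacobiSum χ ψ with hR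
  have hmain : (p:ℂ) + 1 = -R := by linear_combination h0
  have hcardX' : X'.card ≤ 5 := by
    have := card_XX_le (p := p)
    rw [hX', Finset.card_erase_of_mem one_mem_XX]
    omega
  have habs : ‖R‖ ≤ 20 * Real.sqrt p := by
    have hbd : ∀ χ ∈ X',
        ‖∑ ψ ∈ X'.erase χ⁻¹, (χ * ψ) k * jacobiSum χ ψ‖ ≤ 4 * Real.sqrt p := by
      intro χ hχ
      have hχ1 : χ ≠ 1 := Finset.ne_of_mem_erase hχ
      have hχX : χ ∈ XX p := Finset.mem_of_mem_erase hχ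
      have hinvX : χ⁻¹ ∈ XX p := mem_XX.mpr (by rw [inv_pow, mem_XX.mp hχX, inv_one])
      have hinv1 : χ⁻¹ ≠ (1 : MulChar (ZMod p) ℂ) := fun h => hχ1 (by rwa [inv_eq_one] at h)
      have hinvX' : χ⁻¹ ∈ X' := Finset.mem_erase.mpr ⟨hinv1, hinvX⟩
      have hterm : ∀ ψ ∈ X'.erase χ⁻¹,
          ‖(χ * ψ) k * jacobiSum χ ψ‖ = Real.sqrt p := by
        intro ψ hψ
        have hψX' : ψ ∈ X' := Finset.mem_of_mem_erase hψ
        have hψ1 : ψ ≠ 1 := Finset.ne_of_mem_erase hψX'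
        have hψX : ψ ∈ XX p := Finset.mem_of_mem_erase hψX'
        have hψne : ψ ≠ χ⁻¹ := Finset.ne_of_mem_erase hψ
        have hχψ : χ * ψ ≠ 1 := fun h => hψne (eq_inv_of_mul_eq_one_right h)
        have hmem : χ * ψ ∈ XX p := mem_XX.mpr
          (by rw [mul_pow, mem_XX.mp hχX, mem_XX.mp hψX, mul_one])
        rw [norm_mul, abs_apply_eq_one hmem hk, one_mul, abs_jacobiSum hχ1 hψ1 hχψ]
      calc ‖∑ ψ ∈ X'.erase χ⁻¹, (χ * ψ) k * jacobiSum χ ψ‖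
          ≤ ∑ ψ ∈ X'.erase χ⁻¹, ‖(χ * ψ) k * jacobiSum χ ψ‖ :=
            norm_sum_le _ _
        _ = ∑ _ψ ∈ X'.erase χ⁻¹, Real.sqrt p := Finset.sum_congr rfl hterm
        _ = ((X'.erase χ⁻¹).card : ℝ) * Real.sqrt p := by
            rw [Finset.sum_const, nsmul_eq_mul]
        _ ≤ 4 * Real.sqrt p := by
            refine mul_le_mul_of_nonneg_right ?_ (Real.sqrt_nonneg _)
            have h4 : (X'.erase χ⁻¹).card ≤ 4 := by
              rw [Finset.card_erase_of_mem hinvX']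
              omega
            exact_mod_cast h4
    calc ‖R‖
        ≤ ∑ χ ∈ X', ‖∑ ψ ∈ X'.erase χ⁻¹, (χ * ψ) k * jacobiSum χ ψ‖ :=
          norm_sum_le _ _
      _ ≤ ∑ _χ ∈ X', 4 * Real.sqrt p := Finset.sum_le_sum hbd
      _ = (X'.card : ℝ) * (4 * Real.sqrt p) := by rw [Finset.sum_const, nsmul_eq_mul]
      _ ≤ 5 * (4 * Real.sqrt p) := by
          refine mul_le_mul_of_nonneg_right ?_ (by positivity)
          exact_mod_cast hcardX'
      _ = 20 * Real.sqrt p := by ring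
  have hfin : (p:ℝ) + 1 ≤ 20 * Real.sqrt p := by
    have h1 : ‖(p:ℂ) + 1‖ = (p:ℝ) + 1 := by
      rw [show ((p:ℂ) + 1) = (((p:ℝ) + 1 : ℝ) : ℂ) by push_cast; ring, Complex.norm_real,
        Real.norm_eq_abs, abs_of_nonneg (by positivity)]
    calc (p:ℝ) + 1 = ‖(p:ℂ) + 1‖ := h1.symm
      _ = ‖R‖ := by rw [hmain, norm_neg]
      _ ≤ 20 * Real.sqrt p := habs
  have hs : Real.sqrt (p:ℝ) ^ 2 = (p:ℝ) := Real.sq_sqrt (Nat.cast_nonneg p)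
  have hp' : (400:ℝ) < (p:ℝ) := by exact_mod_cast hp400
  nlinarith [Real.sqrt_nonneg (p:ℝ), hs, hfin, hp', sq_nonneg (Real.sqrt (p:ℝ) - 20)]

end SolvAux

/-- If `k` is a positive integer and `p > 400` is a prime not dividing `6k`, then
`x^6 + y^6 = k·z^6` has a nontrivial solution over `ℤ/pℤ`. -/
theorem solvable_mod_large_prime (k : ℕ) (hk : 0 < k) (p : ℕ) (hp : p.Prime)
    (hp400 : 400 < p) (hpk : ¬ p ∣ 6 * k) :
    ∃ x y z : ZMod p, ¬(x = 0 ∧ y = 0 ∧ z = 0) ∧ x ^ 6 + y ^ 6 = (k : ZMod p) * z ^ 6 := by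
  haveI : Fact p.Prime := ⟨hp⟩
  have hk0 : (k : ZMod p) ≠ 0 := by
    rw [Ne, ZMod.natCast_eq_zero_iff]
    exact fun h => hpk (dvd_mul_of_dvd_right h 6)
  by_contra hcon
  have hsol : ∀ x y z : ZMod p, x ^ 6 + y ^ 6 = (k : ZMod p) * z ^ 6 →
      x = 0 ∧ y = 0 ∧ z = 0 := fun x y z h => by
    by_contra hC
    exact hcon ⟨x, y, z, hC, h⟩
  refine SolvAux.main_count hk0 hp400 (fun x y h => ?_) (fun x h => ?_)
  · exact one_ne_zero (hsol x y 1 (by rw [one_pow, mul_one]; exact h)).2.2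
  · exact one_ne_zero (hsol x 1 0 (by rw [h, one_pow, neg_add_cancel]; ring)).2.1
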